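/- Adopt the Grid setup and let M > 0 and ε > 0. There is an absolute constant K₀ (independent of a, b, K, K', M, ε, and the parameters) such that if K' ≥ max{12LM/(5ε), 30·log(12LMK/ε), K₀}, then for every j ∈ {1,…,K} and l ∈ {1,…,K'}, ∫_a^b |π_{jl}(x) − 1_{(a_{jl}, a_{j(l+1)}]}(x)| dx < ε/(3M). -/

import Mathlib

open MeasureTheory

noncomputable section

/-- Width `L = (b-a)/K` of the coarse grid. -/
def gL (a b : ℝ) (K : ℕ) : ℝ := (b - a) / K

/-- Left endpoint `a_{jl} = a + (j-1)L + (l-1)L/K'` of the `(j,l)`-th subinterval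
(0-indexed: `j : Fin K`, `l : Fin K'`). -/
def gA (a b : ℝ) (K K' : ℕ) (j : Fin K) (l : Fin K') : ℝ :=
  a + (j : ℕ) * gL a b K + (l : ℕ) * gL a b K / K'

/-- Midpoint `c_{jl}` of the `(j,l)`-th subinterval. -/
def gC (a b : ℝ) (K K' : ℕ) (j : Fin K) (l : Fin K') : ℝ :=
  gA a b K K' j l + gL a b K / (2 * K')

/-- The Gaussian softmax weight `π_{jl}(x)`. -/
def gPi (a b : ℝ) (K K' : ℕ) (μ : Fin K → Fin K' → ℝ) (σ2 : ℝ)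
    (j : Fin K) (l : Fin K') (x : ℝ) : ℝ :=
  Real.exp (-(x - μ j l) ^ 2 / (2 * σ2)) /
    ∑ t : Fin K, ∑ s : Fin K', Real.exp (-(x - μ t s) ^ 2 / (2 * σ2))

end

lemma pair_exp_bound {hs σ2 Kr x m m' γ γ' d c : ℝ}
    (hh : 0 < hs) (hσ : 0 < σ2) (hσ2 : σ2 * Kr ≤ hs ^ 2)
    (hm : |m - γ| ≤ hs / 6) (hm' : |m' - γ'| ≤ hs / 6)
    (hγ : γ + hs ≤ γ') (hd : 0 ≤ d)
    (hx : 2 * x + hs / 3 + 2 * d ≤ γ + γ')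
    (hc0 : 0 ≤ c)
    (hc : c * hs ^ 2 ≤ (γ' - γ - hs / 3) * d) :
    Real.exp (-(x - m') ^ 2 / (2 * σ2)) / Real.exp (-(x - m) ^ 2 / (2 * σ2)) ≤
      Real.exp (-(c * Kr)) := by
  rw [← Real.exp_sub, Real.exp_le_exp]
  have h1 := abs_le.1 hm
  have h2 := abs_le.1 hm'
  have hGm : γ' - γ - hs / 3 ≤ m' - m := by linarith
  have hsum : 2 * d ≤ m + m' - 2 * x := by linarith
  have hprod : (γ' - γ - hs / 3) * (2 * d) ≤ (m' - m) * (m + m' - 2 * x) :=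
    mul_le_mul hGm hsum (by linarith) (by linarith)
  have key : 2 * ((γ' - γ - hs / 3) * d) ≤ (x - m') ^ 2 - (x - m) ^ 2 := by nlinarith [hprod]
  have e1 : -(x - m') ^ 2 / (2 * σ2) - -(x - m) ^ 2 / (2 * σ2)
      = -(((x - m') ^ 2 - (x - m) ^ 2) / (2 * σ2)) := by ring
  rw [e1, neg_le_neg_iff, le_div_iff₀ (by positivity)]
  have h3 : c * (σ2 * Kr) ≤ c * hs ^ 2 := mul_le_mul_of_nonneg_left hσ2 hc0
  nlinarith [key, hc, h3]

lemma pair_exp_bound' {hs σ2 Kr x m m' γ γ' d c : ℝ}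
    (hh : 0 < hs) (hσ : 0 < σ2) (hσ2 : σ2 * Kr ≤ hs ^ 2)
    (hm : |m - γ| ≤ hs / 6) (hm' : |m' - γ'| ≤ hs / 6)
    (hγ : γ + hs ≤ γ') (hd : 0 ≤ d)
    (hx : γ + γ' + hs / 3 + 2 * d ≤ 2 * x)
    (hc0 : 0 ≤ c)
    (hc : c * hs ^ 2 ≤ (γ' - γ - hs / 3) * d) :
    Real.exp (-(x - m) ^ 2 / (2 * σ2)) / Real.exp (-(x - m') ^ 2 / (2 * σ2)) ≤
      Real.exp (-(c * Kr)) := by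
  have := pair_exp_bound (x := -x) (m := -m') (m' := -m) (γ := -γ') (γ' := -γ)
    (hs := hs) (σ2 := σ2) (Kr := Kr) (d := d) (c := c)
    hh hσ hσ2 (by rw [show -m' - -γ' = -(m' - γ') by ring, abs_neg]; exact hm')
    (by rw [show -m - -γ = -(m - γ) by ring, abs_neg]; exact hm)
    (by linarith) hd (by linarith) hc0 (by nlinarith [hc])
  calc Real.exp (-(x - m) ^ 2 / (2 * σ2)) / Real.exp (-(x - m') ^ 2 / (2 * σ2))
      = Real.exp (-(-x - -m) ^ 2 / (2 * σ2)) / Real.exp (-(-x - -m') ^ 2 / (2 * σ2)) := by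
        ring_nf
    _ ≤ Real.exp (-(c * Kr)) := this

/-- inside the cell of `γ`, comparing with a mean `m'` at distance `Q ≥ 1` steps on the RIGHT -/
lemma inside_right {hs σ2 Kr x m m' γ γ' Q c : ℝ}
    (hh : 0 < hs) (hσ : 0 < σ2) (hσ2 : σ2 * Kr ≤ hs ^ 2)
    (hm : |m - γ| ≤ hs / 6) (hm' : |m' - γ'| ≤ hs / 6)
    (hγQ : γ' - γ = Q * hs)
    (hx : 2 * x ≤ 2 * γ + hs - 11 * hs / 30)
    (hcase : (Q = 1 ∧ c = 1 / 90) ∨ (2 ≤ Q ∧ c = 5 / 9)) :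
    Real.exp (-(x - m') ^ 2 / (2 * σ2)) / Real.exp (-(x - m) ^ 2 / (2 * σ2)) ≤
      Real.exp (-(c * Kr)) := by
  have hQ1 : 1 ≤ Q := by rcases hcase with ⟨h1, _⟩ | ⟨h1, _⟩ <;> linarith
  apply pair_exp_bound hh hσ hσ2 hm hm' (by nlinarith) (d := (Q - 1) * hs / 2 + hs / 60)
    (by nlinarith) (by linarith) (by rcases hcase with ⟨_, h1⟩ | ⟨_, h1⟩ <;> rw [h1] <;> norm_num)
  rcases hcase with ⟨h1, h2⟩ | ⟨h1, h2⟩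
  · rw [h1, h2]; nlinarith [sq_nonneg hs]
  · rw [h2, hγQ]
    have h3 : 0 ≤ Q - 2 := by linarith
    nlinarith [mul_pos hh hh, mul_nonneg h3 (mul_pos hh hh).le,
      mul_nonneg (mul_nonneg h3 h3) (mul_pos hh hh).le]

/-- inside the cell of `γ'`, comparing with a mean `m` at distance `Q ≥ 1` steps on the LEFT -/
lemma inside_left {hs σ2 Kr x m m' γ γ' Q c : ℝ}
    (hh : 0 < hs) (hσ : 0 < σ2) (hσ2 : σ2 * Kr ≤ hs ^ 2)
    (hm : |m - γ| ≤ hs / 6) (hm' : |m' - γ'| ≤ hs / 6)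
    (hγQ : γ' - γ = Q * hs)
    (hx : 2 * γ' - hs + 11 * hs / 30 ≤ 2 * x)
    (hcase : (Q = 1 ∧ c = 1 / 90) ∨ (2 ≤ Q ∧ c = 5 / 9)) :
    Real.exp (-(x - m) ^ 2 / (2 * σ2)) / Real.exp (-(x - m') ^ 2 / (2 * σ2)) ≤
      Real.exp (-(c * Kr)) := by
  have hQ1 : 1 ≤ Q := by rcases hcase with ⟨h1, _⟩ | ⟨h1, _⟩ <;> linarith
  apply pair_exp_bound' hh hσ hσ2 hm hm' (by nlinarith) (d := (Q - 1) * hs / 2 + hs / 60)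
    (by nlinarith) (by linarith) (by rcases hcase with ⟨_, h1⟩ | ⟨_, h1⟩ <;> rw [h1] <;> norm_num)
  rcases hcase with ⟨h1, h2⟩ | ⟨h1, h2⟩
  · rw [h1, h2]; nlinarith [sq_nonneg hs]
  · rw [h2, hγQ]
    have h3 : 0 ≤ Q - 2 := by linarith
    nlinarith [mul_pos hh hh, mul_nonneg h3 (mul_pos hh hh).le,
      mul_nonneg (mul_nonneg h3 h3) (mul_pos hh hh).le]

/-- outside: `x` lies `Q ≥ 1` steps to the RIGHT of the cell of `γ`; numerator mean `m` near `γ`. -/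
lemma outside_right {hs σ2 Kr x m m' γ γ' Q c : ℝ}
    (hh : 0 < hs) (hσ : 0 < σ2) (hσ2 : σ2 * Kr ≤ hs ^ 2)
    (hm : |m - γ| ≤ hs / 6) (hm' : |m' - γ'| ≤ hs / 6)
    (hγQ : γ' - γ = Q * hs)
    (hcase : (Q = 1 ∧ c = 1 / 90 ∧ 2 * γ + hs + 11 * hs / 30 ≤ 2 * x)
      ∨ (2 ≤ Q ∧ c = 5 / 9 ∧ 2 * γ - hs + 2 * Q * hs ≤ 2 * x)) :
    Real.exp (-(x - m) ^ 2 / (2 * σ2)) / Real.exp (-(x - m') ^ 2 / (2 * σ2)) ≤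
      Real.exp (-(c * Kr)) := by
  rcases hcase with ⟨h1, h2, h3⟩ | ⟨h1, h2, h3⟩
  · apply pair_exp_bound' hh hσ hσ2 hm hm' (by nlinarith) (d := hs / 60)
      (by positivity) (by rw [h1] at hγQ; linarith) (by rw [h2]; norm_num)
    rw [h2, hγQ, h1]; nlinarith [sq_nonneg hs]
  · apply pair_exp_bound' hh hσ hσ2 hm hm' (by nlinarith) (d := (Q / 2 - 2 / 3) * hs)
      (by nlinarith) (by linarith) (by rw [h2]; norm_num)
    rw [h2, hγQ]
    have h4 : 0 ≤ Q - 2 := by linarith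
    nlinarith [mul_pos hh hh, mul_nonneg h4 (mul_pos hh hh).le,
      mul_nonneg (mul_nonneg h4 h4) (mul_pos hh hh).le]

/-- outside: `x` lies `Q ≥ 1` steps to the LEFT of the cell of `γ'`; numerator mean `m'` near `γ'`. -/
lemma outside_left {hs σ2 Kr x m m' γ γ' Q c : ℝ}
    (hh : 0 < hs) (hσ : 0 < σ2) (hσ2 : σ2 * Kr ≤ hs ^ 2)
    (hm : |m - γ| ≤ hs / 6) (hm' : |m' - γ'| ≤ hs / 6)
    (hγQ : γ' - γ = Q * hs)
    (hcase : (Q = 1 ∧ c = 1 / 90 ∧ 2 * x ≤ 2 * γ' - hs - 11 * hs / 30)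
      ∨ (2 ≤ Q ∧ c = 5 / 9 ∧ 2 * x ≤ 2 * γ' + hs - 2 * Q * hs)) :
    Real.exp (-(x - m') ^ 2 / (2 * σ2)) / Real.exp (-(x - m) ^ 2 / (2 * σ2)) ≤
      Real.exp (-(c * Kr)) := by
  rcases hcase with ⟨h1, h2, h3⟩ | ⟨h1, h2, h3⟩
  · apply pair_exp_bound hh hσ hσ2 hm hm' (by nlinarith) (d := hs / 60)
      (by positivity) (by rw [h1] at hγQ; linarith) (by rw [h2]; norm_num)
    rw [h2, hγQ, h1]; nlinarith [sq_nonneg hs]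
  · apply pair_exp_bound hh hσ hσ2 hm hm' (by nlinarith) (d := (Q / 2 - 2 / 3) * hs)
      (by nlinarith) (by linarith) (by rw [h2]; norm_num)
    rw [h2, hγQ]
    have h4 : 0 ≤ Q - 2 := by linarith
    nlinarith [mul_pos hh hh, mul_nonneg h4 (mul_pos hh hh).le,
      mul_nonneg (mul_nonneg h4 h4) (mul_pos hh hh).le]

lemma Ioc_biUnion_steps (a hs : ℝ) (hh : 0 ≤ hs) (N : ℕ) :
    (⋃ n ∈ Finset.range N, Set.Ioc (a + n * hs) (a + (n + 1 : ℕ) * hs))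
      = Set.Ioc a (a + N * hs) := by
  induction N with
  | zero => simp
  | succ N ih =>
    rw [Finset.range_add_one, Finset.set_biUnion_insert, ih]
    have h1 : a ≤ a + N * hs := by nlinarith [Nat.cast_nonneg (α := ℝ) N]
    have h2 : a + (N : ℕ) * hs ≤ a + ((N + 1 : ℕ) : ℝ) * hs := by push_cast; nlinarith
    rw [Set.union_comm, Set.Ioc_union_Ioc_eq_Ioc h1 h2]

set_option maxHeartbeats 4000000 in
theorem stmt9 :
    ∃ K₀ : ℕ, ∀ (a b : ℝ), a < b → ∀ (K K' : ℕ), 0 < K → 0 < K' →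
      ∀ (M ε : ℝ), 0 < M → 0 < ε →
      max (max (12 * gL a b K * M / (5 * ε))
            (30 * Real.log (12 * gL a b K * M * K / ε))) (K₀ : ℝ) ≤ (K' : ℝ) →
      ∀ (μ : Fin K → Fin K' → ℝ),
        (∀ j l, |μ j l - gC a b K K' j l| ≤ gL a b K / (6 * K')) →
      ∀ σ2 : ℝ, gL a b K ^ 2 / (2 * (K' : ℝ) ^ 3) ≤ σ2 →
        σ2 ≤ gL a b K ^ 2 / (K' : ℝ) ^ 3 →
      ∀ (j : Fin K) (l : Fin K'),
        (∫ x in Set.Ioc a b,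
          |gPi a b K K' μ σ2 j l x -
            Set.indicator (Set.Ioc (gA a b K K' j l) (gA a b K K' j l + gL a b K / K'))
              (fun _ => (1 : ℝ)) x|)
          < ε / (3 * M) := by
  classical
  refine ⟨900, ?_⟩
  intro a b hab K K' hK hK' M ε hM hε hmax μ hμ σ2 hσl hσr j l
  have hKpos : (0:ℝ) < K := by exact_mod_cast hK
  have hK'pos : (0:ℝ) < K' := by exact_mod_cast hK'
  have hL : 0 < gL a b K := div_pos (by linarith) hKpos
  obtain ⟨L, hLdef⟩ : ∃ y : ℝ, y = gL a b K := ⟨_, rfl⟩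
  rw [← hLdef] at hμ hσl hσr hmax ⊢
  rw [← hLdef] at hL
  obtain ⟨h, hhdef⟩ : ∃ y : ℝ, y = L / K' := ⟨_, rfl⟩
  rw [← hhdef]
  have hh : 0 < h := by rw [hhdef]; exact div_pos hL hK'pos
  -- consequences of the max hypothesis
  have hm1 : 12 * L * M / (5 * ε) ≤ (K' : ℝ) :=
    le_trans (le_trans (le_max_left _ _) (le_max_left _ _)) hmax
  have hm2 : 30 * Real.log (12 * L * M * K / ε) ≤ (K' : ℝ) :=
    le_trans (le_trans (le_max_right _ _) (le_max_left _ _)) hmax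
  have hm3 : (900 : ℝ) ≤ (K' : ℝ) := by
    have := le_trans (le_max_right _ _) hmax
    exact_mod_cast this
  have hσ : 0 < σ2 := lt_of_lt_of_le (by positivity) hσl
  have hσ2K : σ2 * (K' : ℝ) ≤ h ^ 2 := by
    have h1 : σ2 * (K' : ℝ) ≤ L ^ 2 / (K' : ℝ) ^ 3 * K' :=
      mul_le_mul_of_nonneg_right hσr hK'pos.le
    have h2 : L ^ 2 / (K' : ℝ) ^ 3 * K' = h ^ 2 := by
      rw [hhdef]; field_simp
    linarith [h1, h2.symm.le]
  have hh54 : 12 * M * h ≤ 5 * ε := by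
    have h1 : 12 * L * M ≤ (K' : ℝ) * (5 * ε) := by
      rw [div_le_iff₀ (by positivity)] at hm1; linarith
    rw [hhdef, show 12 * M * (L / K') = 12 * L * M / K' by ring, div_le_iff₀ hK'pos]
    linarith
  have hLK : L * (K : ℝ) ≤ Real.exp ((K' : ℝ) / 30) * (ε / (12 * M)) := by
    have hQpos : (0:ℝ) < 12 * L * M * K / ε := by positivity
    have h1 : 12 * L * M * K / ε ≤ Real.exp ((K' : ℝ) / 30) := by
      rw [← Real.exp_log hQpos]
      exact Real.exp_le_exp.2 (by linarith)
    rw [div_le_iff₀ hε] at h1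
    rw [show Real.exp ((K' : ℝ) / 30) * (ε / (12 * M)) = Real.exp ((K' : ℝ) / 30) * ε / (12 * M) by ring,
      le_div_iff₀ (by positivity)]
    nlinarith
  -- grid setup
  obtain ⟨ν, hνdef⟩ : ∃ f : Fin K × Fin K' → ℕ, f = fun p => p.1 * K' + p.2 := ⟨_, rfl⟩
  obtain ⟨Ap, hApdef⟩ : ∃ f : Fin K × Fin K' → ℝ, f = fun p => a + (ν p : ℝ) * h := ⟨_, rfl⟩
  obtain ⟨cp, hcpdef⟩ : ∃ f : Fin K × Fin K' → ℝ, f = fun p => Ap p + h / 2 := ⟨_, rfl⟩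
  obtain ⟨p0, hp0def⟩ : ∃ p : Fin K × Fin K', p = (j, l) := ⟨_, rfl⟩
  have hνmono : ∀ p q : Fin K × Fin K', p.1.val < q.1.val → ν p < ν q := by
    intro p q hlt
    have hp2 := p.2.2
    simp only [hνdef]
    calc p.1.val * K' + p.2.val < p.1.val * K' + K' := by omega
      _ = (p.1.val + 1) * K' := by ring
      _ ≤ q.1.val * K' := Nat.mul_le_mul_right K' hlt
      _ ≤ q.1.val * K' + q.2.val := Nat.le_add_right _ _
  have hνval : ∀ p : Fin K × Fin K', ν p = p.1.val * K' + p.2.val := by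
    intro p; simp [hνdef]
  have hνinj : ∀ p q : Fin K × Fin K', ν p = ν q → p = q := by
    intro p q hpq
    rw [hνval p, hνval q] at hpq
    have h1 : p.1.val = q.1.val := by
      rcases lt_trichotomy p.1.val q.1.val with hc | hc | hc
      · have hm := hνmono p q hc; rw [hνval p, hνval q] at hm; omega
      · exact hc
      · have hm := hνmono q p hc; rw [hνval p, hνval q] at hm; omega
    have h2 : p.2.val = q.2.val := by rw [h1] at hpq; omega
    exact Prod.ext (Fin.ext h1) (Fin.ext h2)
  have hνlt : ∀ p : Fin K × Fin K', ν p < K * K' := by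
    intro p
    have hp1 := p.1.2
    have hp2 := p.2.2
    simp only [hνdef]
    calc p.1.val * K' + p.2.val < p.1.val * K' + K' := by omega
      _ = (p.1.val + 1) * K' := by ring
      _ ≤ K * K' := Nat.mul_le_mul_right K' (by omega)
  have hgA : ∀ p : Fin K × Fin K', gA a b K K' p.1 p.2 = Ap p := by
    intro p
    simp only [hApdef, hνdef, hhdef, hLdef, gA]
    push_cast
    field_simp
    ring
  have hmean : ∀ p : Fin K × Fin K', |μ p.1 p.2 - cp p| ≤ h / 6 := by
    intro p
    have h1 := hμ p.1 p.2
    have h2 : gC a b K K' p.1 p.2 = cp p := by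
      rw [gC, hgA]
      simp only [hcpdef, hhdef, hLdef]
      ring
    have h3 : L / (6 * (K' : ℝ)) = h / 6 := by rw [hhdef]; ring
    rw [h2, h3] at h1
    exact h1
  have hcdiff : ∀ p q : Fin K × Fin K', cp q - cp p = ((ν q : ℝ) - (ν p : ℝ)) * h := by
    intro p q
    simp only [hcpdef, hApdef]
    ring
  have hAdiff : ∀ p q : Fin K × Fin K', Ap q - Ap p = ((ν q : ℝ) - (ν p : ℝ)) * h := by
    intro p q
    simp only [hApdef]
    ring
  -- softmax pieces
  obtain ⟨E, hEdef⟩ : ∃ f : Fin K × Fin K' → ℝ → ℝ,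
      f = fun p x => Real.exp (-(x - μ p.1 p.2) ^ 2 / (2 * σ2)) := ⟨_, rfl⟩
  obtain ⟨Z, hZdef⟩ : ∃ f : ℝ → ℝ, f = fun x => ∑ p : Fin K × Fin K', E p x := ⟨_, rfl⟩
  have hEpos : ∀ p x, 0 < E p x := by
    intro p x; simp only [hEdef]; exact Real.exp_pos _
  have hZpos : ∀ x, 0 < Z x := by
    intro x; simp only [hZdef]
    exact Finset.sum_pos (fun p _ => hEpos p x) ⟨p0, Finset.mem_univ p0⟩
  have hEleZ : ∀ p x, E p x ≤ Z x := by
    intro p x; simp only [hZdef]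
    exact Finset.single_le_sum (f := fun q => E q x) (fun q _ => (hEpos q x).le)
      (Finset.mem_univ p)
  have hπeq : ∀ x, gPi a b K K' μ σ2 j l x = E p0 x / Z x := by
    intro x
    simp only [gPi, hEdef, hZdef, hp0def, Fintype.sum_prod_type]
  have hπ01 : ∀ x, 0 ≤ E p0 x / Z x ∧ E p0 x / Z x ≤ 1 := fun x =>
    ⟨div_nonneg (hEpos p0 x).le (hZpos x).le, (div_le_one (hZpos x)).2 (hEleZ p0 x)⟩
  obtain ⟨e1, he1def⟩ : ∃ y : ℝ, y = Real.exp (-(1 / 90 * (K' : ℝ))) := ⟨_, rfl⟩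
  obtain ⟨e2, he2def⟩ : ∃ y : ℝ, y = Real.exp (-(5 / 9 * (K' : ℝ))) := ⟨_, rfl⟩
  obtain ⟨Cq, hCqdef⟩ : ∃ f : Fin K × Fin K' → ℝ,
      f = fun p => if ν p = ν p0 + 1 ∨ ν p + 1 = ν p0 then e1 else e2 := ⟨_, rfl⟩
  have hCqpos : ∀ p, 0 < Cq p := by
    intro p; simp only [hCqdef]
    split
    · rw [he1def]; exact Real.exp_pos _
    · rw [he2def]; exact Real.exp_pos _
  obtain ⟨SC, hSCdef⟩ : ∃ y : ℝ, y = ∑ p ∈ Finset.univ.erase p0, Cq p := ⟨_, rfl⟩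
  have hSCpos : 0 ≤ SC := by
    rw [hSCdef]; exact Finset.sum_nonneg fun p _ => (hCqpos p).le
  obtain ⟨δ, hδdef⟩ : ∃ y : ℝ, y = 11 * h / 60 := ⟨_, rfl⟩
  have hcp : ∀ p, cp p = Ap p + h / 2 := by intro p; simp only [hcpdef]
  -- Inside bound
  have hin : ∀ x, Ap p0 + δ ≤ x → x ≤ Ap p0 + h - δ → 1 - E p0 x / Z x ≤ SC := by
    intro x hx1 hx2
    have hZx := hZpos x
    have hE0 := hEpos p0 x
    have hsum : E p0 x + ∑ p ∈ Finset.univ.erase p0, E p x = Z x := by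
      simp only [hZdef]
      exact Finset.add_sum_erase _ (fun p => E p x) (Finset.mem_univ p0)
    have hfrac : 1 - E p0 x / Z x = (∑ p ∈ Finset.univ.erase p0, E p x) / Z x := by
      rw [eq_div_iff hZx.ne', sub_mul, one_mul, div_mul_cancel₀ _ hZx.ne']
      linarith
    rw [hfrac]
    have step1 : (∑ p ∈ Finset.univ.erase p0, E p x) / Z x
        ≤ (∑ p ∈ Finset.univ.erase p0, E p x) / E p0 x := by
      rw [div_eq_mul_inv, div_eq_mul_inv]
      exact mul_le_mul_of_nonneg_left (inv_anti₀ hE0 (hEleZ p0 x))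
        (Finset.sum_nonneg fun p _ => (hEpos p x).le)
    refine le_trans step1 ?_
    rw [Finset.sum_div, hSCdef]
    apply Finset.sum_le_sum
    intro p hp
    have hpne : p ≠ p0 := Finset.ne_of_mem_erase hp
    have hνne : ν p ≠ ν p0 := fun e => hpne (hνinj _ _ e)
    have hEE : E p x / E p0 x
        = Real.exp (-(x - μ p.1 p.2) ^ 2 / (2 * σ2))
          / Real.exp (-(x - μ p0.1 p0.2) ^ 2 / (2 * σ2)) := by simp only [hEdef]
    rcases Nat.lt_or_ge (ν p0) (ν p) with hgt | hge
    · -- p to the right of p0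
      have hγQ : cp p - cp p0 = ((ν p : ℝ) - (ν p0 : ℝ)) * h := hcdiff p0 p
      have hxle : 2 * x ≤ 2 * cp p0 + h - 11 * h / 30 := by
        rw [hcp p0]; linarith
      by_cases hadj : ν p = ν p0 + 1
      · have hCq : Cq p = e1 := by simp only [hCqdef]; exact if_pos (Or.inl hadj)
        have hQ1 : ((ν p : ℕ) : ℝ) = ((ν p0 : ℕ) : ℝ) + 1 := by exact_mod_cast hadj
        rw [hCq, he1def, hEE]
        exact inside_right hh hσ hσ2K (hmean p0) (hmean p) hγQ hxle
          (Or.inl ⟨by linarith, rfl⟩)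
      · have hCq : Cq p = e2 := by
          simp only [hCqdef]
          exact if_neg (by omega)
        have hQ2 : ((ν p0 : ℕ) : ℝ) + 2 ≤ ((ν p : ℕ) : ℝ) := by
          have : ν p0 + 2 ≤ ν p := by omega
          exact_mod_cast this
        rw [hCq, he2def, hEE]
        exact inside_right hh hσ hσ2K (hmean p0) (hmean p) hγQ hxle
          (Or.inr ⟨by linarith, rfl⟩)
    · have hlt : ν p < ν p0 := lt_of_le_of_ne hge (by omega)
      have hγQ : cp p0 - cp p = ((ν p0 : ℝ) - (ν p : ℝ)) * h := hcdiff p p0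
      have hxge : 2 * cp p0 - h + 11 * h / 30 ≤ 2 * x := by
        rw [hcp p0]; linarith
      by_cases hadj : ν p + 1 = ν p0
      · have hCq : Cq p = e1 := by simp only [hCqdef]; exact if_pos (Or.inr hadj)
        have hQ1 : ((ν p0 : ℕ) : ℝ) = ((ν p : ℕ) : ℝ) + 1 := by exact_mod_cast hadj.symm
        rw [hCq, he1def, hEE]
        exact inside_left hh hσ hσ2K (hmean p) (hmean p0) hγQ hxge
          (Or.inl ⟨by linarith, rfl⟩)
      · have hCq : Cq p = e2 := by
          simp only [hCqdef]
          exact if_neg (by omega)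
        have hQ2 : ((ν p : ℕ) : ℝ) + 2 ≤ ((ν p0 : ℕ) : ℝ) := by
          have : ν p + 2 ≤ ν p0 := by omega
          exact_mod_cast this
        rw [hCq, he2def, hEE]
        exact inside_left hh hσ hσ2K (hmean p) (hmean p0) hγQ hxge
          (Or.inr ⟨by linarith, rfl⟩)
  -- the boundary strip
  obtain ⟨S, hSdef⟩ : ∃ s : Set ℝ,
      s = Set.Icc (Ap p0 - δ) (Ap p0 + δ) ∪ Set.Icc (Ap p0 + h - δ) (Ap p0 + h + δ) := ⟨_, rfl⟩
  -- Outside bound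
  have hout : ∀ p, p ≠ p0 → ∀ x, x ∈ Set.Ioc (Ap p) (Ap p + h) → x ∉ S →
      E p0 x / E p x ≤ Cq p := by
    intro p hpne x hx hxS
    rw [hSdef, Set.mem_union] at hxS
    push_neg at hxS
    obtain ⟨hS1, hS2⟩ := hxS
    rw [Set.mem_Icc, not_and_or, not_le, not_le] at hS1 hS2
    have hδpos : 0 < δ := by rw [hδdef]; positivity
    have hνne : ν p ≠ ν p0 := fun e => hpne (hνinj _ _ e)
    have hEE : E p0 x / E p x
        = Real.exp (-(x - μ p0.1 p0.2) ^ 2 / (2 * σ2))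
          / Real.exp (-(x - μ p.1 p.2) ^ 2 / (2 * σ2)) := by simp only [hEdef]
    rcases Nat.lt_or_ge (ν p0) (ν p) with hgt | hge
    · -- x to the right of the cell of p0
      have hγQ : cp p - cp p0 = ((ν p : ℝ) - (ν p0 : ℝ)) * h := hcdiff p0 p
      have hApd : Ap p - Ap p0 = ((ν p : ℝ) - (ν p0 : ℝ)) * h := hAdiff p0 p
      by_cases hadj : ν p = ν p0 + 1
      · have hCq : Cq p = e1 := by simp only [hCqdef]; exact if_pos (Or.inl hadj)
        have hQ1 : ((ν p : ℕ) : ℝ) = ((ν p0 : ℕ) : ℝ) + 1 := by exact_mod_cast hadj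
        have hxgt : Ap p0 + h + δ < x := by
          have hApp : Ap p = Ap p0 + h := by nlinarith [hApd, hQ1]
          rcases hS2 with hc | hc
          · exfalso; have := hx.1; rw [hApp] at this; linarith
          · exact hc
        rw [hCq, he1def, hEE]
        refine outside_right hh hσ hσ2K (hmean p0) (hmean p) hγQ
          (Or.inl ⟨by linarith, rfl, ?_⟩)
        rw [hcp p0]; linarith
      · have hCq : Cq p = e2 := by simp only [hCqdef]; exact if_neg (by omega)
        have hQ2 : ((ν p0 : ℕ) : ℝ) + 2 ≤ ((ν p : ℕ) : ℝ) := by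
          have : ν p0 + 2 ≤ ν p := by omega
          exact_mod_cast this
        rw [hCq, he2def, hEE]
        refine outside_right hh hσ hσ2K (hmean p0) (hmean p) hγQ
          (Or.inr ⟨by linarith, rfl, ?_⟩)
        have := hx.1
        rw [hcp p0]; nlinarith [hApd]
    · have hlt : ν p < ν p0 := lt_of_le_of_ne hge (by omega)
      have hγQ : cp p0 - cp p = ((ν p0 : ℝ) - (ν p : ℝ)) * h := hcdiff p p0
      have hApd : Ap p0 - Ap p = ((ν p0 : ℝ) - (ν p : ℝ)) * h := hAdiff p p0
      by_cases hadj : ν p + 1 = ν p0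
      · have hCq : Cq p = e1 := by simp only [hCqdef]; exact if_pos (Or.inr hadj)
        have hQ1 : ((ν p0 : ℕ) : ℝ) = ((ν p : ℕ) : ℝ) + 1 := by exact_mod_cast hadj.symm
        have hxlt : x < Ap p0 - δ := by
          have hApp : Ap p + h = Ap p0 := by nlinarith [hApd, hQ1]
          rcases hS1 with hc | hc
          · exact hc
          · exfalso; have := hx.2; rw [hApp] at this; linarith
        rw [hCq, he1def, hEE]
        refine outside_left hh hσ hσ2K (hmean p) (hmean p0) hγQ
          (Or.inl ⟨by linarith, rfl, ?_⟩)
        rw [hcp p0]; linarith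
      · have hCq : Cq p = e2 := by simp only [hCqdef]; exact if_neg (by omega)
        have hQ2 : ((ν p : ℕ) : ℝ) + 2 ≤ ((ν p0 : ℕ) : ℝ) := by
          have : ν p + 2 ≤ ν p0 := by omega
          exact_mod_cast this
        rw [hCq, he2def, hEE]
        refine outside_left hh hσ hσ2K (hmean p) (hmean p0) hγQ
          (Or.inr ⟨by linarith, rfl, ?_⟩)
        have := hx.2
        rw [hcp p0]; nlinarith [hApd]
  -- pointwise facts about the indicator
  have hδpos : 0 < δ := by rw [hδdef]; positivity
  obtain ⟨F, hFdef⟩ : ∃ f : ℝ → ℝ, f = fun x =>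
      |E p0 x / Z x - (Set.Ioc (Ap p0) (Ap p0 + h)).indicator (fun _ => (1:ℝ)) x| := ⟨_, rfl⟩
  have hFx : ∀ x, F x =
      |E p0 x / Z x - (Set.Ioc (Ap p0) (Ap p0 + h)).indicator (fun _ => (1:ℝ)) x| := by
    intro x; rw [hFdef]
  have hF01 : ∀ x, |E p0 x / Z x - (Set.Ioc (Ap p0) (Ap p0 + h)).indicator
      (fun _ => (1:ℝ)) x| ≤ 1 := by
    intro x
    have hpi := hπ01 x
    by_cases hm : x ∈ Set.Ioc (Ap p0) (Ap p0 + h)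
    · rw [Set.indicator_of_mem hm]
      exact abs_le.2 ⟨by linarith [hpi.1], by linarith [hpi.2]⟩
    · rw [Set.indicator_of_notMem hm, sub_zero, abs_of_nonneg hpi.1]
      exact hpi.2
  -- measurability and integrability
  have hπcont : Continuous (fun x => E p0 x / Z x) := by
    have hEc : ∀ p : Fin K × Fin K', Continuous (fun x => E p x) := by
      intro p
      simp only [hEdef]
      exact Real.continuous_exp.comp
        ((((continuous_id.sub continuous_const).pow 2).neg).div_const _)
    have hZc : Continuous Z := by
      rw [hZdef]
      exact continuous_finset_sum _ (fun p _ => hEc p)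
    exact (hEc p0).div hZc (fun x => (hZpos x).ne')
  have hFmeas : Measurable F := by
    rw [hFdef]
    exact (hπcont.measurable.sub
      (measurable_const.indicator measurableSet_Ioc)).abs
  have hFint : ∀ u v : ℝ, MeasureTheory.IntegrableOn F (Set.Ioc u v) volume := by
    intro u v
    have h1 : MeasureTheory.IntegrableOn (fun _ : ℝ => (1:ℝ)) (Set.Ioc u v) volume :=
      integrableOn_const measure_Ioc_lt_top.ne
    refine h1.mono' hFmeas.aestronglyMeasurable (MeasureTheory.ae_of_all _ fun x => ?_)
    rw [Real.norm_eq_abs, hFx x, abs_abs]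
    exact hF01 x
  -- strip is small
  have hSmeas : MeasurableSet S := by
    rw [hSdef]; exact measurableSet_Icc.union measurableSet_Icc
  have hvolS : volume S ≤ ENNReal.ofReal (4 * δ) := by
    rw [hSdef]
    refine le_trans (measure_union_le _ _) ?_
    rw [Real.volume_Icc, Real.volume_Icc,
      show Ap p0 + δ - (Ap p0 - δ) = 2 * δ by ring,
      show Ap p0 + h + δ - (Ap p0 + h - δ) = 2 * δ by ring,
      ← ENNReal.ofReal_add (by positivity) (by positivity)]
    exact ENNReal.ofReal_le_ofReal (by linarith)
  -- cells are disjoint and cover (a, b]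
  have hApval : ∀ p, Ap p = a + (ν p : ℝ) * h := by intro p; simp only [hApdef]
  have hstep : ∀ p q, ν p < ν q → Ap p + h ≤ Ap q := by
    intro p q hlt
    have hc : (ν p : ℝ) + 1 ≤ (ν q : ℝ) := by exact_mod_cast hlt
    have hd := hAdiff p q
    nlinarith [mul_le_mul_of_nonneg_right hc hh.le]
  have hdisj : ∀ p q : Fin K × Fin K', p ≠ q →
      Disjoint (Set.Ioc (Ap p) (Ap p + h)) (Set.Ioc (Ap q) (Ap q + h)) := by
    intro p q hne
    have hνne : ν p ≠ ν q := fun e => hne (hνinj _ _ e)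
    rcases Nat.lt_or_ge (ν p) (ν q) with hc | hc
    · refine Set.disjoint_left.2 fun x hxp hxq => ?_
      have := hstep p q hc
      have := hxp.2
      have := hxq.1
      linarith
    · have hc' : ν q < ν p := by omega
      refine Set.disjoint_left.2 fun x hxp hxq => ?_
      have := hstep q p hc'
      have := hxp.1
      have := hxq.2
      linarith
  have hunion : Set.Ioc a b
      = ⋃ p ∈ (Finset.univ : Finset (Fin K × Fin K')), Set.Ioc (Ap p) (Ap p + h) := by
    have hranges := Ioc_biUnion_steps a h hh.le (K * K')
    have hb : a + ((K * K' : ℕ) : ℝ) * h = b := by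
      rw [hhdef, hLdef, gL]
      push_cast
      field_simp
      ring
    rw [← hb, ← hranges]
    ext x
    simp only [Set.mem_iUnion, Finset.mem_range, Finset.mem_univ, true_and, exists_prop]
    constructor
    · rintro ⟨n, hn, hx⟩
      have hd : n / K' < K := (Nat.div_lt_iff_lt_mul hK').2 hn
      have hm : n % K' < K' := Nat.mod_lt _ hK'
      refine ⟨(⟨n / K', hd⟩, ⟨n % K', hm⟩), ?_⟩
      have hνn : ν (⟨n / K', hd⟩, ⟨n % K', hm⟩) = n := by
        rw [hνval]
        simp only
        rw [Nat.mul_comm]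
        exact Nat.div_add_mod n K'
      have hx1 := hx.1
      have hx2 := hx.2
      push_cast at hx2
      constructor
      · rw [hApval, hνn]; exact hx1
      · rw [hApval, hνn]; linarith
    · rintro ⟨p, hx⟩
      refine ⟨ν p, hνlt p, ?_⟩
      have hx1 := hx.1
      have hx2 := hx.2
      rw [hApval] at hx1 hx2
      constructor
      · exact hx1
      · push_cast; linarith
  -- rewrite the goal
  have hgA0 : gA a b K K' j l = Ap p0 := by rw [hp0def]; exact hgA (j, l)
  have hint_eq : ∀ x, |gPi a b K K' μ σ2 j l x -
      (Set.Ioc (gA a b K K' j l) (gA a b K K' j l + h)).indicator (fun _ => (1:ℝ)) x|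
      = F x := by
    intro x
    rw [hπeq, hgA0, hFx]
  simp only [hint_eq]
  -- decompose the integral over the cells
  have hsplit : ∫ x in Set.Ioc a b, F x
      = ∑ p : Fin K × Fin K', ∫ x in Set.Ioc (Ap p) (Ap p + h), F x := by
    rw [hunion]
    exact MeasureTheory.integral_biUnion_finset Finset.univ (fun p _ => measurableSet_Ioc)
      (fun p _ q _ hpq => hdisj p q hpq) (fun p _ => hFint _ _)
  -- pointwise bound on each cell
  have hptw : ∀ p : Fin K × Fin K', ∀ x ∈ Set.Ioc (Ap p) (Ap p + h),
      F x ≤ S.indicator (fun _ => (1:ℝ)) x + (if p = p0 then SC else Cq p) := by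
    intro p x hx
    have hC0 : 0 ≤ (if p = p0 then SC else Cq p) := by
      split
      · exact hSCpos
      · exact (hCqpos p).le
    rw [hFx]
    by_cases hxS : x ∈ S
    · rw [Set.indicator_of_mem hxS]
      have := hF01 x
      linarith
    · rw [Set.indicator_of_notMem hxS]
      by_cases hpp : p = p0
      · subst hpp
        have hind : (Set.Ioc (Ap p) (Ap p + h)).indicator (fun _ => (1:ℝ)) x = 1 :=
          Set.indicator_of_mem hx _
        rw [hind, if_pos rfl]
        have hxS' := hxS
        rw [hSdef, Set.mem_union] at hxS'
        push_neg at hxS'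
        obtain ⟨hS1, hS2⟩ := hxS'
        rw [Set.mem_Icc, not_and_or, not_le, not_le] at hS1 hS2
        have hx1 : Ap p + δ ≤ x := by
          rcases hS1 with hc | hc
          · exfalso; have := hx.1; linarith
          · linarith
        have hx2 : x ≤ Ap p + h - δ := by
          rcases hS2 with hc | hc
          · linarith
          · exfalso; have := hx.2; linarith
        have hlow := hin x hx1 hx2
        have hpi := hπ01 x
        rw [abs_of_nonpos (by linarith [hpi.2])]
        linarith
      · have hindne : x ∉ Set.Ioc (Ap p0) (Ap p0 + h) := fun hmem =>
          (Set.disjoint_left.1 (hdisj p p0 hpp) hx) hmem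
        rw [Set.indicator_of_notMem hindne, if_neg hpp, sub_zero,
          abs_of_nonneg (hπ01 x).1]
        have hEpZ : E p0 x / Z x ≤ E p0 x / E p x := by
          rw [div_eq_mul_inv, div_eq_mul_inv]
          exact mul_le_mul_of_nonneg_left (inv_anti₀ (hEpos p x) (hEleZ p x))
            (hEpos p0 x).le
        have := hout p hpp x hx hxS
        linarith
  -- per-cell integral bound
  have hvolcell : ∀ p, volume (Set.Ioc (Ap p) (Ap p + h)) = ENNReal.ofReal h := by
    intro p; rw [Real.volume_Ioc]; congr 1; ring
  have hper : ∀ p : Fin K × Fin K', (∫ x in Set.Ioc (Ap p) (Ap p + h), F x)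
      ≤ (volume (Set.Ioc (Ap p) (Ap p + h) ∩ S)).toReal
        + (if p = p0 then SC else Cq p) * h := by
    intro p
    have hintind : MeasureTheory.IntegrableOn (S.indicator (fun _ => (1:ℝ)))
        (Set.Ioc (Ap p) (Ap p + h)) volume :=
      (integrableOn_const measure_Ioc_lt_top.ne).indicator hSmeas
    have hintC : MeasureTheory.IntegrableOn (fun _ : ℝ => (if p = p0 then SC else Cq p))
        (Set.Ioc (Ap p) (Ap p + h)) volume :=
      integrableOn_const measure_Ioc_lt_top.ne
    have hG : MeasureTheory.IntegrableOn (fun x => S.indicator (fun _ => (1:ℝ)) x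
        + (if p = p0 then SC else Cq p)) (Set.Ioc (Ap p) (Ap p + h)) volume :=
      hintind.add hintC
    have hadd : (∫ x in Set.Ioc (Ap p) (Ap p + h),
        (S.indicator (fun _ => (1:ℝ)) x + (if p = p0 then SC else Cq p)))
        = (∫ x in Set.Ioc (Ap p) (Ap p + h), S.indicator (fun _ => (1:ℝ)) x)
          + (∫ _x in Set.Ioc (Ap p) (Ap p + h), (if p = p0 then SC else Cq p)) :=
      MeasureTheory.integral_add hintind hintC
    have hmono := MeasureTheory.setIntegral_mono_on (hFint (Ap p) (Ap p + h))
      hG measurableSet_Ioc (hptw p)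
    refine le_trans hmono ?_
    rw [hadd]
    have h1 : (∫ x in Set.Ioc (Ap p) (Ap p + h), S.indicator (fun _ => (1:ℝ)) x)
        = (volume (Set.Ioc (Ap p) (Ap p + h) ∩ S)).toReal := by
      rw [MeasureTheory.setIntegral_indicator hSmeas, MeasureTheory.setIntegral_const,
        smul_eq_mul, mul_one, measureReal_def]
    have h2 : (∫ _ in Set.Ioc (Ap p) (Ap p + h), (if p = p0 then SC else Cq p))
        = (if p = p0 then SC else Cq p) * h := by
      rw [MeasureTheory.setIntegral_const, measureReal_def, hvolcell p, ENNReal.toReal_ofReal hh.le,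
        smul_eq_mul, mul_comm]
    rw [h1, h2]
  -- sum of the strip parts
  have hstrip : ∑ p : Fin K × Fin K', (volume (Set.Ioc (Ap p) (Ap p + h) ∩ S)).toReal
      ≤ 4 * δ := by
    have hfin : ∀ p : Fin K × Fin K', volume (Set.Ioc (Ap p) (Ap p + h) ∩ S) ≠ ⊤ := by
      intro p
      refine ne_top_of_le_ne_top ?_ (measure_mono Set.inter_subset_left)
      rw [hvolcell p]
      exact ENNReal.ofReal_ne_top
    rw [← ENNReal.toReal_sum (fun p _ => hfin p)]
    refine ENNReal.toReal_le_of_le_ofReal (by positivity) ?_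
    have heq : ∑ p : Fin K × Fin K', volume (Set.Ioc (Ap p) (Ap p + h) ∩ S)
        = volume (⋃ p ∈ (Finset.univ : Finset (Fin K × Fin K')),
          Set.Ioc (Ap p) (Ap p + h) ∩ S) := by
      rw [measure_biUnion_finset ?_ (fun p _ => measurableSet_Ioc.inter hSmeas)]
      intro p _ q _ hpq
      exact (hdisj p q hpq).mono Set.inter_subset_left Set.inter_subset_left
    rw [heq]
    refine le_trans (measure_mono ?_) hvolS
    exact Set.iUnion₂_subset fun p _ => Set.inter_subset_right
  -- sum of the constants
  have he1pos : 0 < e1 := by rw [he1def]; exact Real.exp_pos _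
  have he2pos : 0 < e2 := by rw [he2def]; exact Real.exp_pos _
  have hSC2 : SC ≤ 2 * e1 + (K : ℝ) * K' * e2 := by
    rw [hSCdef]
    have hterm : ∀ p ∈ Finset.univ.erase p0,
        Cq p ≤ (if ν p = ν p0 + 1 ∨ ν p + 1 = ν p0 then e1 else 0) + e2 := by
      intro p _
      simp only [hCqdef]
      by_cases hc : ν p = ν p0 + 1 ∨ ν p + 1 = ν p0
      · rw [if_pos hc, if_pos hc]; linarith
      · rw [if_neg hc, if_neg hc]; linarith
    refine le_trans (Finset.sum_le_sum hterm) ?_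
    rw [Finset.sum_add_distrib]
    have hA : (∑ p ∈ Finset.univ.erase p0,
        (if ν p = ν p0 + 1 ∨ ν p + 1 = ν p0 then e1 else 0)) ≤ 2 * e1 := by
      rw [← Finset.sum_filter, Finset.sum_const, nsmul_eq_mul]
      have hcard2 : (((Finset.univ.erase p0).filter
          (fun p => ν p = ν p0 + 1 ∨ ν p + 1 = ν p0)).card : ℝ) ≤ 2 := by
        have hle : ((Finset.univ.erase p0).filter
            (fun p => ν p = ν p0 + 1 ∨ ν p + 1 = ν p0)).card
            ≤ ({ν p0 + 1, ν p0 - 1} : Finset ℕ).card := by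
          refine Finset.card_le_card_of_injOn ν ?_ (fun p _ q _ e => hνinj p q e)
          intro p hp
          rw [Finset.mem_coe, Finset.mem_filter] at hp
          rcases hp.2 with hc | hc
          · simp [hc]
          · simp only [Finset.coe_insert, Finset.coe_singleton, Set.mem_insert_iff, Set.mem_singleton_iff]
            right
            omega
        have : ({ν p0 + 1, ν p0 - 1} : Finset ℕ).card ≤ 2 :=
          le_trans (Finset.card_insert_le _ _) (by simp)
        exact_mod_cast le_trans hle this
      exact mul_le_mul_of_nonneg_right hcard2 he1pos.le
    have hB : (∑ _p ∈ Finset.univ.erase p0, e2) ≤ (K : ℝ) * K' * e2 := by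
      rw [Finset.sum_const, nsmul_eq_mul]
      refine mul_le_mul_of_nonneg_right ?_ he2pos.le
      have h1 : (Finset.univ.erase p0).card ≤ K * K' := by
        refine le_trans (Finset.card_erase_le) ?_
        rw [Finset.card_univ, Fintype.card_prod, Fintype.card_fin, Fintype.card_fin]
      exact_mod_cast h1
    linarith
  -- assembling
  have hCsum : (∑ p : Fin K × Fin K', (if p = p0 then SC else Cq p) * h) = 2 * SC * h := by
    rw [← Finset.sum_mul]
    have : (∑ p : Fin K × Fin K', (if p = p0 then SC else Cq p)) = SC + SC := by
      rw [← Finset.add_sum_erase _ _ (Finset.mem_univ p0), if_pos rfl]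
      congr 1
      rw [hSCdef]
      exact Finset.sum_congr rfl (fun p hp => if_neg (Finset.ne_of_mem_erase hp))
    rw [this]
    ring
  have htotal : (∫ x in Set.Ioc a b, F x) ≤ 4 * δ + 2 * SC * h := by
    rw [hsplit]
    refine le_trans (Finset.sum_le_sum (fun p _ => hper p)) ?_
    rw [Finset.sum_add_distrib, hCsum]
    linarith [hstrip]
  -- final numeric estimate
  obtain ⟨u, hu⟩ : ∃ u : ℝ, u = ε / (3 * M) := ⟨_, rfl⟩
  rw [← hu]
  have hupos : 0 < u := by rw [hu]; positivity
  have hhu : h ≤ 5 * u / 4 := by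
    rw [hu, show 5 * (ε / (3 * M)) / 4 = 5 * ε / (12 * M) by ring, le_div_iff₀ (by positivity)]
    linarith [hh54]
  have hexpneg10 : Real.exp (-10 : ℝ) ≤ 1 / 1024 := by
    have h2 : (2:ℝ) ≤ Real.exp 1 := by have := Real.exp_one_gt_d9; linarith
    have hexp10 : (1024:ℝ) ≤ Real.exp 10 := by
      calc (1024:ℝ) = 2 ^ (10:ℕ) := by norm_num
        _ ≤ Real.exp 1 ^ (10:ℕ) := pow_le_pow_left₀ (by norm_num) h2 10
        _ = Real.exp 10 := by rw [← Real.exp_nat_mul]; norm_num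
    rw [Real.exp_neg]
    calc (Real.exp 10)⁻¹ ≤ (1024:ℝ)⁻¹ := inv_anti₀ (by norm_num) hexp10
      _ = 1 / 1024 := by norm_num
  have he1b : e1 ≤ 1 / 1024 := by
    rw [he1def]
    refine le_trans (Real.exp_le_exp.2 (show -(1 / 90 * (K':ℝ)) ≤ (-10:ℝ) by linarith)) hexpneg10
  have hTe2 : L * K * e2 ≤ u / 4 * (1 / 1024) := by
    have hc1 : Real.exp ((K':ℝ) / 30) * e2 ≤ 1 / 1024 := by
      rw [he2def, ← Real.exp_add]
      refine le_trans (Real.exp_le_exp.2 (show (K':ℝ)/30 + -(5/9*(K':ℝ)) ≤ (-10:ℝ) by linarith))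
        hexpneg10
    have hc2 : L * K * e2 ≤ Real.exp ((K':ℝ) / 30) * (ε / (12 * M)) * e2 :=
      mul_le_mul_of_nonneg_right hLK he2pos.le
    have hc3 : Real.exp ((K':ℝ) / 30) * (ε / (12 * M)) * e2
        = ε / (12 * M) * (Real.exp ((K':ℝ) / 30) * e2) := by ring
    have hc4 : ε / (12 * M) * (Real.exp ((K':ℝ) / 30) * e2) ≤ ε / (12 * M) * (1 / 1024) :=
      mul_le_mul_of_nonneg_left hc1 (by positivity)
    have hc5 : ε / (12 * M) * (1 / 1024) = u / 4 * (1 / 1024) := by rw [hu]; ring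
    linarith
  have hhKK : h * ((K : ℝ) * K') = L * K := by
    rw [hhdef]
    field_simp
  have hBeq : (K:ℝ) * K' * e2 * h = L * K * e2 := by rw [← hhKK]; ring
  have hSCh : SC * h ≤ (2 * e1 + (K : ℝ) * K' * e2) * h :=
    mul_le_mul_of_nonneg_right hSC2 hh.le
  have hhe1 : h * e1 ≤ 5 * u / 4 * (1 / 1024) :=
    mul_le_mul hhu he1b he1pos.le (by positivity)
  calc (∫ x in Set.Ioc a b, F x) ≤ 4 * δ + 2 * SC * h := htotal
    _ ≤ 11 * h / 15 + 4 * (h * e1) + 2 * (L * K * e2) := by nlinarith [hSCh, hBeq, hδdef]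
    _ ≤ 11 * (5 * u / 4) / 15 + 4 * (5 * u / 4 * (1 / 1024)) + 2 * (u / 4 * (1 / 1024)) := by
        have := hTe2
        have := hhe1
        linarith
    _ < u := by linarith [hupos]
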